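/- arXiv:1204.5258 — 5 statements merged into one kernel-verified Lean document; each statement's English description precedes it below -/
import Mathlib

section
/- Let Γ be a directed graph and F a field. Let C₁ = (v₁,…,v_m; e₁,…,e_m) and C₂ = (w₁,…,w_k; f₁,…,f_k) be distinct cycles of Γ with a common vertex v₁ = w₁. Set p = e₁…e_m and q = f₁…f_k, regarded as elements of the Leavitt path algebra L(Γ). Then p and q generate a free (non-unital) F-subalgebra of L(Γ): the evaluations u(p,q), as u ranges over all nonempty words in two letters, are linearly independent over F. -/
open scoped BigOperators

section LeavittSetup

variable {V E : Type}

/-- Generators of the Leavitt path algebra of a graph: vertices, edges, and ghost (star) edges. -/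
inductive LGen (V E : Type) : Type
  | vert : V → LGen V E
  | edge : E → LGen V E
  | star : E → LGen V E

variable (F : Type) [Field F]

/-- The vertex generator inside the free algebra. -/
noncomputable def gvert (v : V) : FreeAlgebra F (LGen V E) := FreeAlgebra.ι F (LGen.vert v)

/-- The edge generator inside the free algebra. -/
noncomputable def gedge (e : E) : FreeAlgebra F (LGen V E) := FreeAlgebra.ι F (LGen.edge e)

/-- The ghost edge generator `e*` inside the free algebra. -/
noncomputable def gstar (e : E) : FreeAlgebra F (LGen V E) := FreeAlgebra.ι F (LGen.star e)

variable (s r : E → V)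

/-- The defining relations of the Leavitt path algebra of the graph `(V, E, s, r)`:
(1) `v * w = δ_{v,w} v`; (2) `s(e) e = e = e r(e)` and `r(e) e* = e* = e* s(e)`;
(3) `e* f = δ_{e,f} r(e)`; (4) `v = ∑_{s(e) = v} e e*` for every non-sink `v`
(the sum makes sense whenever `v` emits finitely many edges, in particular for a
row-finite graph). -/
inductive LeavittRel : FreeAlgebra F (LGen V E) → FreeAlgebra F (LGen V E) → Prop
  | vertSelf (v : V) : LeavittRel (gvert F v * gvert F v) (gvert F v)
  | vertNe {v w : V} (h : v ≠ w) : LeavittRel (gvert F v * gvert F w) 0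
  | edgeSource (e : E) : LeavittRel (gvert F (s e) * gedge F e) (gedge F e)
  | edgeRange (e : E) : LeavittRel (gedge F e * gvert F (r e)) (gedge F e)
  | starRange (e : E) : LeavittRel (gvert F (r e) * gstar F e) (gstar F e)
  | starSource (e : E) : LeavittRel (gstar F e * gvert F (s e)) (gstar F e)
  | starEdgeSelf (e : E) : LeavittRel (gstar F e * gedge F e) (gvert F (r e))
  | starEdgeNe {e f : E} (h : e ≠ f) : LeavittRel (gstar F e * gedge F f) 0
  | ck (v : V) (h : {e : E | s e = v}.Finite) (hne : ∃ e, s e = v) :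
      LeavittRel (gvert F v) (∑ e ∈ h.toFinset, gedge F e * gstar F e)

/-- The Leavitt path algebra `L(Γ)` of the graph `Γ = (V, E, s, r)` over the field `F`,
presented as the quotient of the free algebra on the generators by the Leavitt relations. -/
noncomputable abbrev LeavittPathAlgebra := RingQuot (LeavittRel F s r)

/-- The image of a vertex in the Leavitt path algebra. -/
noncomputable def lvert (v : V) : LeavittPathAlgebra F s r :=
  RingQuot.mkAlgHom F (LeavittRel F s r) (gvert F v)

/-- The image of an edge in the Leavitt path algebra. -/
noncomputable def ledge (e : E) : LeavittPathAlgebra F s r :=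
  RingQuot.mkAlgHom F (LeavittRel F s r) (gedge F e)

/-- The image of a ghost edge `e*` in the Leavitt path algebra. -/
noncomputable def lstar (e : E) : LeavittPathAlgebra F s r :=
  RingQuot.mkAlgHom F (LeavittRel F s r) (gstar F e)

/-- The element of the Leavitt path algebra given by a path `p = e₁ ⋯ eₙ` (a list of edges). -/
noncomputable def lpath (p : List E) : LeavittPathAlgebra F s r := (p.map (ledge F s r)).prod

/-- The element `p* = eₙ* ⋯ e₁*` of the Leavitt path algebra given by a path `p = e₁ ⋯ eₙ`. -/
noncomputable def lpathStar (p : List E) : LeavittPathAlgebra F s r :=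
  (p.reverse.map (lstar F s r)).prod

/-- A list of edges is a path when the range of each edge is the source of the next. -/
def IsPath (s r : E → V) (p : List E) : Prop := List.Chain' (fun e f => r e = s f) p

/-- A nonempty path starts at the source of its first edge. -/
def StartsAt (s : E → V) (p : List E) (v : V) : Prop := ∃ e, p.head? = some e ∧ s e = v

/-- A nonempty path ends at the range of its last edge. -/
def EndsAt (r : E → V) (p : List E) (v : V) : Prop := ∃ e, p.getLast? = some e ∧ r e = v

/-- A (nonempty) closed path: it starts and ends at the same vertex. -/
def IsClosedPath (s r : E → V) (p : List E) : Prop := ∃ v, StartsAt s p v ∧ EndsAt r p v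

/-- A cycle: a closed path whose source vertices are pairwise distinct.  A cycle is
identified with the subgraph it spans, i.e. with its set of edges `{e | e ∈ p}`. -/
def IsCycle (s r : E → V) (p : List E) : Prop :=
  IsPath s r p ∧ IsClosedPath s r p ∧ (p.map s).Nodup

/-- The vertex set `V(C)` of a cycle (the sources of its edges). -/
def cycleVerts (s : E → V) (c : List E) : Set V := {v | ∃ e ∈ c, s e = v}

/-- `C ⟹ C'`: some (possibly empty) path starts at a vertex of `C` and ends at a
vertex of `C'`. -/
def CycleConnects (s r : E → V) (c c' : List E) : Prop :=
  ∃ v w, v ∈ cycleVerts s c ∧ w ∈ cycleVerts s c' ∧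
    (v = w ∨ ∃ p, p ≠ [] ∧ IsPath s r p ∧ StartsAt s p v ∧ EndsAt r p w)

/-- A chain of cycles `C₁ ⟹ C₂ ⟹ ⋯ ⟹ C_k`: pairwise distinct cycles, each connected
to the next; its length is the number of cycles. -/
def IsChainOfCycles (s r : E → V) (cs : List (List E)) : Prop :=
  (∀ c ∈ cs, IsCycle s r c) ∧ List.Chain' (CycleConnects s r) cs ∧
    List.Pairwise (fun c c' => {e | e ∈ c} ≠ {e | e ∈ c'}) cs

/-- A cycle has an exit if some edge starts at a vertex of the cycle but is not an
edge of the cycle. -/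
def HasExit (s : E → V) (c : List E) : Prop := ∃ e, s e ∈ cycleVerts s c ∧ e ∉ c

/-- A chain of cycles with an exit: the last cycle of the chain has an exit. -/
def ChainWithExit (s r : E → V) (cs : List (List E)) : Prop :=
  IsChainOfCycles s r cs ∧ ∃ c, cs.getLast? = some c ∧ HasExit s c

/-- Any two distinct cycles of the graph have no common vertex: two cycles sharing a
vertex coincide (have the same edge set). -/
def SeparatedCycles (s r : E → V) : Prop :=
  ∀ c c', IsCycle s r c → IsCycle s r c' →
    (cycleVerts s c ∩ cycleVerts s c').Nonempty → {e | e ∈ c} = {e | e ∈ c'}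

/-- `W + W² + ⋯ + Wⁿ` for a subspace `W` of an `F`-algebra. -/
noncomputable def powsSum {A : Type} [Semiring A] [Algebra F A]
    (W : Submodule F A) (n : ℕ) : Submodule F A :=
  ∑ i ∈ Finset.Icc 1 n, W ^ i

open scoped Classical

/-! ### Auxiliary: a representation of the Leavitt path algebra on infinite paths -/

/-- Infinite paths in the graph. -/
def InfPath (s r : E → V) : Type := {g : ℕ → E // ∀ n, r (g n) = s (g (n + 1))}

/-- Prepend an edge to an infinite path. -/
def econs (e : E) (g : InfPath s r) (h : r e = s (g.1 0)) : InfPath s r :=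
  ⟨fun n => Nat.casesOn n e (fun k => g.1 k), by
    intro n
    cases n with
    | zero => exact h
    | succ k => exact g.2 k⟩

/-- Drop the first edge of an infinite path. -/
def etail (g : InfPath s r) : InfPath s r := ⟨fun n => g.1 (n + 1), fun n => g.2 (n + 1)⟩

/-- The module on which the Leavitt path algebra acts. -/
abbrev LMod : Type := InfPath s r →₀ F

/-- Build a linear endomorphism from values on basis elements. -/
noncomputable def opOf (f : InfPath s r → LMod F s r) : Module.End F (LMod F s r) :=
  Finsupp.lsum F fun g => LinearMap.toSpanSingleton F _ (f g)

lemma opOf_single (f : InfPath s r → LMod F s r) (g : InfPath s r) (c : F) :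
    opOf F s r f (Finsupp.single g c) = c • f g := by
  simp [opOf, LinearMap.toSpanSingleton]

/-- Action of a vertex. -/
noncomputable def vertOp (v : V) : Module.End F (LMod F s r) :=
  opOf F s r fun g => if s (g.1 0) = v then Finsupp.single g 1 else 0

/-- Action of an edge. -/
noncomputable def edgeOp (e : E) : Module.End F (LMod F s r) :=
  opOf F s r fun g => if h : r e = s (g.1 0) then Finsupp.single (econs s r e g h) 1 else 0

/-- Action of a ghost edge. -/
noncomputable def starOp (e : E) : Module.End F (LMod F s r) :=
  opOf F s r fun g => if g.1 0 = e then Finsupp.single (etail s r g) 1 else 0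

/-- The representation of the free algebra. -/
noncomputable def rep : FreeAlgebra F (LGen V E) →ₐ[F] Module.End F (LMod F s r) :=
  FreeAlgebra.lift F fun x => match x with
    | LGen.vert v => vertOp F s r v
    | LGen.edge e => edgeOp F s r e
    | LGen.star e => starOp F s r e

@[simp] lemma rep_gvert (v : V) : rep F s r (gvert F v) = vertOp F s r v := by
  simp [rep, gvert, FreeAlgebra.lift_ι_apply]

@[simp] lemma rep_gedge (e : E) : rep F s r (gedge F e) = edgeOp F s r e := by
  simp [rep, gedge, FreeAlgebra.lift_ι_apply]

@[simp] lemma rep_gstar (e : E) : rep F s r (gstar F e) = starOp F s r e := by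
  simp [rep, gstar, FreeAlgebra.lift_ι_apply]
lemma econs_etail (g : InfPath s r) (h : r (g.1 0) = s ((etail s r g).1 0)) :
    econs s r (g.1 0) (etail s r g) h = g := by
  apply Subtype.ext; funext n; cases n <;> rfl

lemma etail_econs (e : E) (g : InfPath s r) (h : r e = s (g.1 0)) :
    etail s r (econs s r e g h) = g := by
  apply Subtype.ext; funext n; rfl

lemma vertOp_single (v : V) (g : InfPath s r) (c : F) :
    vertOp F s r v (Finsupp.single g c) =
      if s (g.1 0) = v then Finsupp.single g c else 0 := by
  rw [vertOp, opOf_single]; split_ifs <;> simp [Finsupp.smul_single]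

lemma edgeOp_single (e : E) (g : InfPath s r) (c : F) :
    edgeOp F s r e (Finsupp.single g c) =
      if h : r e = s (g.1 0) then Finsupp.single (econs s r e g h) c else 0 := by
  rw [edgeOp, opOf_single]; split_ifs <;> simp [Finsupp.smul_single]

lemma starOp_single (e : E) (g : InfPath s r) (c : F) :
    starOp F s r e (Finsupp.single g c) =
      if g.1 0 = e then Finsupp.single (etail s r g) c else 0 := by
  rw [starOp, opOf_single]; split_ifs <;> simp [Finsupp.smul_single]

lemma rep_rel {a b : FreeAlgebra F (LGen V E)} (h : LeavittRel F s r a b) :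
    rep F s r a = rep F s r b := by
  induction h with
  | vertSelf v =>
    rw [map_mul]; apply Finsupp.lhom_ext; intro g c
    rw [Module.End.mul_apply, rep_gvert]
    by_cases hv : s (g.1 0) = v <;> simp [vertOp_single, hv]
  | @vertNe v w hvw =>
    rw [map_mul, map_zero]; apply Finsupp.lhom_ext; intro g c
    rw [Module.End.mul_apply, rep_gvert, rep_gvert]
    by_cases hv : s (g.1 0) = w
    · have : ¬ (s (g.1 0) = v) := by rw [hv]; exact fun h => hvw h.symm
      simp only [vertOp_single, if_pos hv, if_neg this, LinearMap.zero_apply]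
    · simp [vertOp_single, hv]
  | edgeSource e =>
    rw [map_mul]; apply Finsupp.lhom_ext; intro g c
    rw [Module.End.mul_apply, rep_gvert, rep_gedge]
    by_cases he : r e = s (g.1 0)
    · have h0 : s ((econs s r e g he).1 0) = s e := rfl
      simp [edgeOp_single, he, vertOp_single, h0]
    · simp [edgeOp_single, he]
  | edgeRange e =>
    rw [map_mul]; apply Finsupp.lhom_ext; intro g c
    rw [Module.End.mul_apply, rep_gvert, rep_gedge]
    by_cases hv : s (g.1 0) = r e
    · rw [vertOp_single, if_pos hv, edgeOp_single, dif_pos hv.symm]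
    · have h2 : ¬ (r e = s (g.1 0)) := fun h => hv h.symm
      rw [vertOp_single, if_neg hv, edgeOp_single, dif_neg h2, map_zero]
  | starRange e =>
    rw [map_mul]; apply Finsupp.lhom_ext; intro g c
    rw [Module.End.mul_apply, rep_gvert, rep_gstar]
    by_cases he : g.1 0 = e
    · have hsrc : s ((etail s r g).1 0) = r e := by
        have := g.2 0; rw [he] at this; exact this.symm
      simp [starOp_single, he, vertOp_single, hsrc]
    · simp [starOp_single, he]
  | starSource e =>
    rw [map_mul]; apply Finsupp.lhom_ext; intro g c
    rw [Module.End.mul_apply, rep_gvert, rep_gstar]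
    by_cases he : g.1 0 = e
    · have : s (g.1 0) = s e := by rw [he]
      simp [vertOp_single, this, starOp_single, he]
    · by_cases hv : s (g.1 0) = s e <;> simp [vertOp_single, hv, starOp_single, he]
  | starEdgeSelf e =>
    rw [map_mul]; apply Finsupp.lhom_ext; intro g c
    rw [Module.End.mul_apply, rep_gvert, rep_gedge, rep_gstar]
    by_cases he : r e = s (g.1 0)
    · have h0 : (econs s r e g he).1 0 = e := rfl
      rw [edgeOp_single, dif_pos he, starOp_single, if_pos h0, etail_econs,
        vertOp_single, if_pos he.symm]
    · have : ¬ (s (g.1 0) = r e) := fun h => he h.symm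
      simp [edgeOp_single, he, vertOp_single, this]
  | @starEdgeNe e f hef =>
    rw [map_mul, map_zero]; apply Finsupp.lhom_ext; intro g c
    rw [Module.End.mul_apply, rep_gedge, rep_gstar]
    by_cases he : r f = s (g.1 0)
    · have h0 : (econs s r f g he).1 0 = f := rfl
      rw [edgeOp_single, dif_pos he, starOp_single, if_neg (by rw [h0]; exact fun h => hef h.symm)]
      simp
    · simp [edgeOp_single, he]
  | ck v hfin hne =>
    rw [map_sum]; apply Finsupp.lhom_ext; intro g c
    rw [rep_gvert, LinearMap.sum_apply, vertOp_single]
    by_cases hv : s (g.1 0) = v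
    · rw [if_pos hv, Finset.sum_eq_single (g.1 0)]
      · rw [map_mul, Module.End.mul_apply, rep_gedge, rep_gstar, starOp_single, if_pos rfl,
          edgeOp_single]
        have hh : r (g.1 0) = s ((etail s r g).1 0) := g.2 0
        rw [dif_pos hh, econs_etail]
      · intro e he hne'
        rw [map_mul, Module.End.mul_apply, rep_gedge, rep_gstar, starOp_single,
          if_neg (fun h => hne' h.symm)]
        simp
      · intro hnotin
        exact absurd (by simpa using hv : g.1 0 ∈ hfin.toFinset) hnotin
    · rw [if_neg hv]
      symm
      apply Finset.sum_eq_zero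
      intro e he
      rw [map_mul, Module.End.mul_apply, rep_gedge, rep_gstar, starOp_single]
      have : g.1 0 ≠ e := by
        intro h; apply hv; rw [h]; simpa using he
      simp [this]

/-- The representation of the Leavitt path algebra. -/
noncomputable def repL : LeavittPathAlgebra F s r →ₐ[F] Module.End F (LMod F s r) :=
  RingQuot.liftAlgHom F ⟨rep F s r, fun _ _ h => rep_rel F s r h⟩

@[simp] lemma repL_ledge (e : E) : repL F s r (ledge F s r e) = edgeOp F s r e := by
  rw [repL, ledge, RingQuot.liftAlgHom_mkAlgHom_apply, rep_gedge]
/-! ### Appending a finite list to an infinite sequence -/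

/-- Prepend a finite list of edges to an infinite sequence of edges. -/
def appSeq : List E → (ℕ → E) → (ℕ → E)
  | [], g => g
  | e :: l, g => fun n => Nat.casesOn n e (appSeq l g)

@[simp] lemma appSeq_nil (g : ℕ → E) : appSeq [] g = g := rfl

@[simp] lemma appSeq_cons_zero (e : E) (l : List E) (g : ℕ → E) :
    appSeq (e :: l) g 0 = e := rfl

@[simp] lemma appSeq_cons_succ (e : E) (l : List E) (g : ℕ → E) (n : ℕ) :
    appSeq (e :: l) g (n + 1) = appSeq l g n := rfl

lemma appSeq_append (l₁ l₂ : List E) (g : ℕ → E) :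
    appSeq (l₁ ++ l₂) g = appSeq l₁ (appSeq l₂ g) := by
  induction l₁ with
  | nil => rfl
  | cons e l ih => funext n; cases n with
    | zero => rfl
    | succ k => rw [List.cons_append, appSeq_cons_succ, appSeq_cons_succ, ih]

lemma appSeq_length_add (l : List E) (g : ℕ → E) (n : ℕ) :
    appSeq l g (l.length + n) = g n := by
  induction l with
  | nil => simp
  | cons e l ih =>
      have : (e :: l).length + n = (l.length + n) + 1 := by
        simp [List.length_cons]; omega
      rw [this, appSeq_cons_succ, ih]

lemma appSeq_lt (l : List E) (g : ℕ → E) (n : ℕ) (h : n < l.length) :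
    appSeq l g n = l.get ⟨n, h⟩ := by
  induction l generalizing n with
  | nil => simp at h
  | cons e l ih =>
      cases n with
      | zero => rfl
      | succ k =>
          rw [appSeq_cons_succ, ih k (by simpa using Nat.lt_of_succ_lt_succ h)]
          rfl

lemma chain_appSeq : ∀ (l : List E), IsPath s r l → ∀ (g : InfPath s r),
    (∀ e ∈ l.getLast?, r e = s (g.1 0)) →
    ∀ n, r (appSeq l g.1 n) = s (appSeq l g.1 (n + 1))
  | [], _, g, _, n => g.2 n
  | [e], _, g, hend, 0 => by
      have := hend e (by simp)
      simpa using this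
  | [e], _, g, _, (n+1) => g.2 n
  | e :: f :: l, hp, _, _, 0 => (List.isChain_cons_cons.mp hp).1
  | e :: f :: l, hp, g, hend, (n+1) =>
      chain_appSeq (f :: l) (List.isChain_cons_cons.mp hp).2 g
        (by intro e' he'; exact hend e' (by rwa [List.getLast?_cons_cons])) n

/-- Extend an infinite path by a finite path ending at its start. -/
def extendPath (l : List E) (hp : IsPath s r l) (g : InfPath s r)
    (hend : ∀ e ∈ l.getLast?, r e = s (g.1 0)) : InfPath s r :=
  ⟨appSeq l g.1, chain_appSeq s r l hp g hend⟩

lemma repL_lpath (l : List E) (g : InfPath s r) (hp : IsPath s r l)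
    (hend : ∀ e ∈ l.getLast?, r e = s (g.1 0)) :
    repL F s r (lpath F s r l) (Finsupp.single g 1) =
      Finsupp.single (extendPath s r l hp g hend) 1 := by
  revert hp hend
  induction l with
  | nil =>
      intro hp hend
      have h0 : extendPath s r [] hp g hend = g := Subtype.ext rfl
      rw [h0]
      simp [lpath]
  | cons e l ih =>
      intro hp hend
      have hp' : IsPath s r l := List.IsChain.tail hp
      have hend' : ∀ e' ∈ l.getLast?, r e' = s (g.1 0) := by
        intro e' he'
        apply hend
        cases l with
        | nil => simp at he'
        | cons f l' => rwa [List.getLast?_cons_cons]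
      have hre : r e = s ((extendPath s r l hp' g hend').1 0) := by
        cases l with
        | nil => exact hend e (by simp)
        | cons f l' => exact (List.isChain_cons_cons.mp hp).1
      rw [lpath, List.map_cons, List.prod_cons, map_mul, Module.End.mul_apply]
      rw [← lpath, ih hp' hend', repL_ledge, edgeOp_single, dif_pos hre]
      congr 1

/-! ### Words in two cycles -/

/-- The list of edges obtained by expanding a word in the two given blocks. -/
def wordPath (P Q : List E) (u : List Bool) : List E :=
  (u.map fun b => if b then P else Q).flatten

@[simp] lemma wordPath_nil (P Q : List E) : wordPath P Q [] = [] := rfl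

lemma wordPath_cons (P Q : List E) (b : Bool) (u : List Bool) :
    wordPath P Q (b :: u) = (if b then P else Q) ++ wordPath P Q u := by
  simp [wordPath]

lemma lpath_append (a b : List E) :
    lpath F s r (a ++ b) = lpath F s r a * lpath F s r b := by
  simp [lpath]

lemma prod_map_word (P Q : List E) (u : List Bool) :
    (u.map fun b => if b then lpath F s r P else lpath F s r Q).prod =
      lpath F s r (wordPath P Q u) := by
  induction u with
  | nil => simp [lpath]
  | cons b u ih =>
      rw [List.map_cons, List.prod_cons, ih, wordPath_cons, lpath_append]
      cases b <;> simp
/-! ### Blocks and unique decoding -/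

/-- A block at `v`: a nonempty path whose sources are pairwise distinct and whose
first source is `v`. -/
def IsBlock (s : E → V) (v : V) (X : List E) : Prop :=
  X ≠ [] ∧ (∀ e ∈ X.head?, s e = v) ∧ (X.map s).Nodup

lemma IsBlock.length_pos {s : E → V} {v : V} {X : List E} (hX : IsBlock s v X) :
    0 < X.length := List.length_pos_iff.mpr hX.1

lemma IsBlock.src_zero {s : E → V} {v : V} {X : List E} (hX : IsBlock s v X)
    (h : 0 < X.length) : s (X.get ⟨0, h⟩) = v := by
  obtain ⟨e, X', rfl⟩ : ∃ e X', X = e :: X' := by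
    cases X with
    | nil => exact absurd rfl hX.1
    | cons e X' => exact ⟨e, X', rfl⟩
  exact hX.2.1 e rfl

lemma IsBlock.src_ne {s : E → V} {v : V} {X : List E} (hX : IsBlock s v X)
    {j : ℕ} (h0 : 0 < j) (hj : j < X.length) : s (X.get ⟨j, hj⟩) ≠ v := by
  intro hv
  have hlen : 0 < X.length := hX.length_pos
  have h0v : s (X.get ⟨0, hlen⟩) = v := hX.src_zero hlen
  have hnd : (X.map s).Nodup := hX.2.2
  have hget : ∀ (i : ℕ) (hi : i < X.length),
      (X.map s).get ⟨i, by simpa using hi⟩ = s (X.get ⟨i, hi⟩) := by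
    intro i hi; simp
  have : (X.map s).get ⟨0, by simpa using hlen⟩ = (X.map s).get ⟨j, by simpa using hj⟩ := by
    rw [hget 0 hlen, hget j hj, h0v, hv]
  have := (hnd.get_inj_iff.mp this)
  simp only [Fin.mk.injEq] at this
  omega

lemma appSeq_block_src {s : E → V} {v : V} {X : List E} (hX : IsBlock s v X)
    (t : ℕ → E) : s (appSeq X t 0) = v := by
  have h := hX.length_pos
  rw [appSeq_lt X t 0 h]
  exact hX.src_zero h

/-- Peeling off the first block from an equality of infinite sequences. -/
lemma peel_block {s : E → V} {v : V} {X Y : List E} (hX : IsBlock s v X)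
    (hY : IsBlock s v Y) {t t' : ℕ → E} (ht : s (t 0) = v) (ht' : s (t' 0) = v)
    (h : appSeq X t = appSeq Y t') : X = Y ∧ t = t' := by
  have hlen : X.length = Y.length := by
    rcases lt_trichotomy X.length Y.length with hlt | heq | hgt
    · exfalso
      have h1 : appSeq X t X.length = t 0 := by
        have := appSeq_length_add X t 0; simpa using this
      have h2 : appSeq Y t' X.length = Y.get ⟨X.length, hlt⟩ := appSeq_lt _ _ _ hlt
      have := hY.src_ne hX.length_pos hlt
      rw [← h2, ← congrFun h X.length, h1, ht] at this
      exact this rfl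
    · exact heq
    · exfalso
      have h1 : appSeq Y t' Y.length = t' 0 := by
        have := appSeq_length_add Y t' 0; simpa using this
      have h2 : appSeq X t Y.length = X.get ⟨Y.length, hgt⟩ := appSeq_lt _ _ _ hgt
      have := hX.src_ne hY.length_pos hgt
      rw [← h2, congrFun h Y.length, h1, ht'] at this
      exact this rfl
  have hXY : X = Y := by
    apply List.ext_get hlen
    intro i hi hi'
    rw [← appSeq_lt X t i hi, ← appSeq_lt Y t' i hi', congrFun h i]
  subst hXY
  refine ⟨rfl, funext fun n => ?_⟩
  have h1 := appSeq_length_add X t n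
  have h2 := appSeq_length_add X t' n
  rw [← h1, ← h2, congrFun h (X.length + n)]

/-- Index congruence for `List.get`. -/
lemma get_congr {α : Type} (l : List α) {i j : ℕ} (hi : i < l.length) (h : i = j) :
    l.get ⟨i, hi⟩ = l.get ⟨j, h ▸ hi⟩ := by subst h; rfl

/-! ### The periodic infinite path traversing a cycle -/

/-- The infinite sequence obtained by repeating a nonempty list. -/
def cycSeq (P : List E) (hP : P ≠ []) : ℕ → E :=
  fun n => P.get ⟨n % P.length, Nat.mod_lt n (List.length_pos_iff.mpr hP)⟩

lemma succ_mod (m n : ℕ) : (n + 1) % m = (n % m + 1) % m := by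
  rw [Nat.add_mod n 1 m, Nat.add_mod (n % m) 1 m, Nat.mod_mod_of_dvd n dvd_rfl]

lemma cycSeq_chain {s r : E → V} (P : List E) (hP : P ≠ []) (hpath : IsPath s r P)
    (hcl : ∀ e ∈ P.getLast?, ∀ f ∈ P.head?, r e = s f) :
    ∀ n, r (cycSeq P hP n) = s (cycSeq P hP (n + 1)) := by
  intro n
  have hm : 0 < P.length := List.length_pos_iff.mpr hP
  have hj : n % P.length < P.length := Nat.mod_lt n hm
  rcases eq_or_lt_of_le (Nat.succ_le_of_lt hj) with hcase | hcase
  · -- wrap around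
    have hc : n % P.length + 1 = P.length := hcase
    have hmod : (n + 1) % P.length = 0 := by
      rw [succ_mod, hc, Nat.mod_self]
    have hx : P.get ⟨n % P.length, hj⟩ ∈ P.getLast? := by
      rw [List.getLast?_eq_getLast_of_ne_nil hP, Option.mem_def, Option.some.injEq,
        List.getLast_eq_getElem]
      show P.get _ = P.get _
      exact get_congr P (by omega) (by omega)
    have hy : P.get ⟨0, hm⟩ ∈ P.head? := by
      cases P with
      | nil => exact absurd rfl hP
      | cons e l => rfl
    have e2 : cycSeq P hP (n + 1) = P.get ⟨0, hm⟩ := get_congr P _ hmod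
    rw [show cycSeq P hP n = P.get ⟨n % P.length, hj⟩ from rfl, e2]
    exact hcl _ hx _ hy
  · -- no wrap
    have hc : n % P.length + 1 < P.length := hcase
    have hmod : (n + 1) % P.length = n % P.length + 1 := by
      rw [succ_mod, Nat.mod_eq_of_lt hc]
    have h := List.isChain_iff_getElem.mp hpath (n % P.length) (by omega)
    have e2 : cycSeq P hP (n + 1) = P.get ⟨n % P.length + 1, hc⟩ := get_congr P _ hmod
    rw [show cycSeq P hP n = P.get ⟨n % P.length, hj⟩ from rfl, e2]
    exact h

lemma appSeq_cycSeq (P : List E) (hP : P ≠ []) :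
    appSeq P (cycSeq P hP) = cycSeq P hP := by
  funext n
  have hm : 0 < P.length := List.length_pos_iff.mpr hP
  by_cases h : n < P.length
  · rw [appSeq_lt P _ n h]
    exact get_congr P h (Nat.mod_eq_of_lt h).symm
  · push_neg at h
    obtain ⟨k, rfl⟩ : ∃ k, n = P.length + k := ⟨n - P.length, by omega⟩
    rw [appSeq_length_add]
    show P.get _ = P.get _
    exact get_congr P _ (Nat.add_mod_left _ _).symm
/-- Unique decoding: two words expanding to the same infinite sequence coincide. -/
lemma decode {s : E → V} {v : V} {P Q : List E} (hBP : IsBlock s v P)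
    (hBQ : IsBlock s v Q) (hPQ : P ≠ Q) {pinf : ℕ → E}
    (hper : appSeq P pinf = pinf) (hpv : s (pinf 0) = v) :
    ∀ u u' : List Bool,
      appSeq (wordPath P Q u) (appSeq Q pinf) =
        appSeq (wordPath P Q u') (appSeq Q pinf) → u = u' := by
  have hblock : ∀ b : Bool, IsBlock s v (if b then P else Q) := by
    intro b; cases b
    · simpa using hBQ
    · simpa using hBP
  have hTv : s (appSeq Q pinf 0) = v := appSeq_block_src hBQ _
  have hWv : ∀ u : List Bool, s (appSeq (wordPath P Q u) (appSeq Q pinf) 0) = v := by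
    intro u; cases u with
    | nil => exact hTv
    | cons b t => rw [wordPath_cons, appSeq_append]; exact appSeq_block_src (hblock b) _
  have noQ : ∀ u, appSeq (wordPath P Q u) (appSeq Q pinf) ≠ pinf := by
    intro u
    induction u with
    | nil =>
        intro h
        exact hPQ (peel_block hBP hBQ hpv hpv (hper.trans h.symm)).1
    | cons b t ih =>
        intro h
        rw [wordPath_cons, appSeq_append] at h
        have h2 : appSeq (if b then P else Q)
            (appSeq (wordPath P Q t) (appSeq Q pinf)) = appSeq P pinf :=
          h.trans hper.symm
        have hXb : (if b then P else Q) = P := (peel_block (hblock b) hBP (hWv t) hpv h2).1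
        exact ih (peel_block (hblock b) hBP (hWv t) hpv h2).2
  have onlyNil : ∀ u, appSeq (wordPath P Q u) (appSeq Q pinf) = appSeq Q pinf → u = [] := by
    intro u h
    cases u with
    | nil => rfl
    | cons b t =>
        rw [wordPath_cons, appSeq_append] at h
        exact absurd (peel_block (hblock b) hBQ (hWv t) hpv h).2 (noQ t)
  intro u
  induction u with
  | nil =>
      intro u' h
      exact (onlyNil u' h.symm).symm
  | cons b t ih =>
      intro u' h
      cases u' with
      | nil => exact absurd (onlyNil (b :: t) h) (by simp)
      | cons b' t' =>
          rw [wordPath_cons, wordPath_cons, appSeq_append, appSeq_append] at h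
          obtain ⟨hXY, htail⟩ := peel_block (hblock b) (hblock b') (hWv t) (hWv t') h
          have hb : b = b' := by
            cases b <;> cases b' <;> simp_all
          subst hb
          exact congrArg (List.cons b) (ih t' htail)
/-- Lemma 1 of the paper.  If `C₁` and `C₂` are distinct cycles of `Γ`
with a common starting vertex, and `p`, `q` are the corresponding closed paths
traversing them once, then `p` and `q` generate a free (non-unital) subalgebra of
`L(Γ)`: the evaluations `u(p, q)` over all nonempty words `u` in two letters are
linearly independent over `F`. -/
theorem free_subalgebra_of_two_cycles
    (es₁ es₂ : List E) (h₁ : IsCycle s r es₁) (h₂ : IsCycle s r es₂)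
    (hdistinct : {e | e ∈ es₁} ≠ {e | e ∈ es₂})
    (hcommon : ∃ e₁ e₂, es₁.head? = some e₁ ∧ es₂.head? = some e₂ ∧ s e₁ = s e₂) :
    LinearIndependent F
      (fun u : {w : List Bool // w ≠ []} =>
        (u.val.map (fun b => if b then lpath F s r es₁ else lpath F s r es₂)).prod) := by
  classical
  obtain ⟨e₁, e₂, hh1, hh2, he12⟩ := hcommon
  obtain ⟨hp1, hc1, hnd1⟩ := h₁
  obtain ⟨hp2, hc2, hnd2⟩ := h₂
  set v : V := s e₁ with hv
  -- basic facts about the two cycles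
  have hP : es₁ ≠ [] := by intro h; rw [h] at hh1; simp at hh1
  have hQ : es₂ ≠ [] := by intro h; rw [h] at hh2; simp at hh2
  have hhead1 : ∀ e ∈ es₁.head?, s e = v := by
    intro e he; rw [hh1, Option.mem_def, Option.some.injEq] at he; subst he
    exact hv.symm
  have hhead2 : ∀ e ∈ es₂.head?, s e = v := by
    intro e he; rw [hh2, Option.mem_def, Option.some.injEq] at he; subst he
    exact he12.symm
  have hlast1 : ∀ e ∈ es₁.getLast?, r e = v := by
    obtain ⟨v', ⟨e, he, hse⟩, ⟨f, hf, hrf⟩⟩ := hc1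
    rw [hh1, Option.some.injEq] at he
    subst he
    intro e' he'
    rw [hf, Option.mem_def, Option.some.injEq] at he'
    subst he'
    rw [hrf, ← hse]
  have hlast2 : ∀ e ∈ es₂.getLast?, r e = v := by
    obtain ⟨v', ⟨e, he, hse⟩, ⟨f, hf, hrf⟩⟩ := hc2
    rw [hh2, Option.some.injEq] at he
    subst he
    intro e' he'
    rw [hf, Option.mem_def, Option.some.injEq] at he'
    subst he'
    rw [hrf, ← hse]
    exact he12.symm
  have hBP : IsBlock s v es₁ := ⟨hP, hhead1, hnd1⟩
  have hBQ : IsBlock s v es₂ := ⟨hQ, hhead2, hnd2⟩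
  have hPQ : es₁ ≠ es₂ := fun h => hdistinct (by rw [h])
  -- the periodic infinite path on the first cycle
  have hcl1 : ∀ e ∈ es₁.getLast?, ∀ f ∈ es₁.head?, r e = s f := by
    intro e he f hf; rw [hlast1 e he, hhead1 f hf]
  set gP : InfPath s r := ⟨cycSeq es₁ hP, cycSeq_chain es₁ hP hp1 hcl1⟩ with hgP
  have hpv : s (gP.1 0) = v := by
    have h0 : gP.1 0 = es₁.get ⟨0, hBP.length_pos⟩ :=
      get_congr es₁ _ (Nat.zero_mod _)
    rw [h0]; exact hBP.src_zero _
  have hper : appSeq es₁ gP.1 = gP.1 := appSeq_cycSeq es₁ hP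
  -- the base point x₀ = Q · P^∞
  have hQend : ∀ e ∈ es₂.getLast?, r e = s (gP.1 0) := by
    intro e he; rw [hlast2 e he, hpv]
  set x₀ : InfPath s r := extendPath s r es₂ hp2 gP hQend with hx₀
  have hTv : s (x₀.1 0) = v := appSeq_block_src hBQ gP.1
  -- properties of word paths
  have hgood : ∀ u : List Bool, IsPath s r (wordPath es₁ es₂ u) ∧
      (∀ e ∈ (wordPath es₁ es₂ u).head?, s e = v) ∧
      (∀ e ∈ (wordPath es₁ es₂ u).getLast?, r e = v) := by
    intro u
    induction u with
    | nil =>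
        refine ⟨List.isChain_nil, ?_, ?_⟩ <;> intro e he <;> simp at he
    | cons b t ih =>
        have hXpath : IsPath s r (if b then es₁ else es₂) := by
          cases b <;> [exact hp2; exact hp1]
        have hXne : (if b then es₁ else es₂) ≠ [] := by
          cases b <;> [exact hQ; exact hP]
        have hXhead : ∀ e ∈ (if b then es₁ else es₂).head?, s e = v := by
          cases b <;> [exact hhead2; exact hhead1]
        have hXlast : ∀ e ∈ (if b then es₁ else es₂).getLast?, r e = v := by
          cases b <;> [exact hlast2; exact hlast1]
        rw [wordPath_cons]
        refine ⟨?_, ?_, ?_⟩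
        · apply List.IsChain.append hXpath ih.1
          intro x hx y hy
          rw [hXlast x hx, ih.2.1 y hy]
        · intro e he
          rw [List.head?_append_of_ne_nil _ hXne] at he
          exact hXhead e he
        · intro e he
          by_cases hw : wordPath es₁ es₂ t = []
          · rw [hw, List.append_nil] at he
            exact hXlast e he
          · rw [List.getLast?_append_of_ne_nil _ hw] at he
            exact ih.2.2 e he
  -- the infinite paths given by words
  have hWend : ∀ u : List Bool, ∀ e ∈ (wordPath es₁ es₂ u).getLast?,
      r e = s (x₀.1 0) := by
    intro u e he; rw [(hgood u).2.2 e he, hTv]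
  set Wfun : List Bool → InfPath s r :=
    fun u => extendPath s r (wordPath es₁ es₂ u) (hgood u).1 x₀ (hWend u) with hWfun
  -- the evaluation linear map
  set Φ : LeavittPathAlgebra F s r →ₗ[F] LMod F s r :=
    (LinearMap.applyₗ (Finsupp.single x₀ (1 : F))).comp (repL F s r).toLinearMap with hΦ
  apply LinearIndependent.of_comp Φ
  have hfam : (Φ ∘ fun u : {w : List Bool // w ≠ []} =>
      (u.val.map (fun b => if b then lpath F s r es₁ else lpath F s r es₂)).prod) =
      fun u : {w : List Bool // w ≠ []} => Finsupp.single (Wfun u.val) (1 : F) := by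
    funext u
    show Φ ((u.val.map fun b => if b then lpath F s r es₁ else lpath F s r es₂).prod) = _
    rw [prod_map_word, hΦ]
    show repL F s r (lpath F s r (wordPath es₁ es₂ u.val)) (Finsupp.single x₀ 1) = _
    rw [repL_lpath F s r (wordPath es₁ es₂ u.val) x₀ (hgood u.val).1 (hWend u.val)]
  rw [hfam]
  have hinj : Function.Injective
      (fun u : {w : List Bool // w ≠ []} => Wfun u.val) := by
    intro a b hab
    apply Subtype.ext
    apply decode hBP hBQ hPQ hper hpv
    exact congrArg Subtype.val hab
  exact (Finsupp.basisSingleOne (ι := InfPath s r) (R := F)).linearIndependent.comp _ hinj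

end LeavittSetup
end

section
/- Let Γ be a directed graph in which any two distinct cycles have no common vertex. If C′ and C″ are cycles of Γ such that there is a path starting at a vertex of C′ and ending at a vertex of C″, and also a path starting at a vertex of C″ and ending at a vertex of C′, then C′ = C″. -/
open scoped BigOperators

section LeavittSetup

variable {V E : Type}

variable (F : Type) [Field F]

variable (s r : E → V)

/-- Junction relation in a concatenated path. -/
private lemma path_junction {p q : List E} (h : IsPath s r (p ++ q)) {x y : E}
    (hx : p.getLast? = some x) (hy : q.head? = some y) : r x = s y :=
  (List.isChain_append.mp h).2.2 x hx y hy

private lemma path_append {p q : List E} (hp : IsPath s r p) (hq : IsPath s r q)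
    (h : ∀ x, p.getLast? = some x → ∀ y, q.head? = some y → r x = s y) :
    IsPath s r (p ++ q) :=
  List.isChain_append.mpr ⟨hp, hq, h⟩

/-- Loop removal: any nonempty path can be simplified to one with pairwise
distinct source vertices, with the same start vertex, the same last edge,
and edges among those of the original path. -/
private lemma simplify_path_aux : ∀ (n : ℕ) (p : List E), p.length ≤ n →
    IsPath s r p → p ≠ [] →
    ∃ q : List E, q ≠ [] ∧ IsPath s r q ∧ (q.map s).Nodup ∧
      (∀ e, p.head? = some e → ∃ e', q.head? = some e' ∧ s e' = s e) ∧
      q.getLast? = p.getLast? ∧ ∀ e ∈ q, e ∈ p := by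
  intro n
  induction n with
  | zero =>
    intro p hl _ hne
    exact absurd (List.eq_nil_of_length_eq_zero (Nat.le_zero.mp hl)) hne
  | succ n ih =>
    intro p hl hp hne
    by_cases hd : (p.map s).Nodup
    · exact ⟨p, hne, hp, hd, fun e he => ⟨e, he, rfl⟩, rfl, fun _ he => he⟩
    rw [List.nodup_iff_injective_get] at hd
    simp only [Function.Injective, not_forall] at hd
    obtain ⟨a, b, hab, hne'⟩ := hd
    -- produce i < j < p.length with s p[i] = s p[j]
    have hmain : ∀ (i j : ℕ) (hi : i < p.length) (hj : j < p.length), i < j →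
        s (p[i]) = s (p[j]) →
        ∃ q : List E, q ≠ [] ∧ IsPath s r q ∧ (q.map s).Nodup ∧
          (∀ e, p.head? = some e → ∃ e', q.head? = some e' ∧ s e' = s e) ∧
          q.getLast? = p.getLast? ∧ ∀ e ∈ q, e ∈ p := by
      intro i j hi hj hij hs
      set q₀ := p.take i ++ p.drop j with hq₀
      have hq₀len : q₀.length = i + (p.length - j) := by
        simp [hq₀, List.length_take, List.length_drop, Nat.min_eq_left (le_of_lt hi)]
      have hdropne : p.drop j ≠ [] := by
        rw [ne_eq, List.drop_eq_nil_iff]; omega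
      have hq₀ne : q₀ ≠ [] := by
        intro h
        rcases List.append_eq_nil_iff.mp h with ⟨_, h2⟩
        exact hdropne h2
      have hq₀path : IsPath s r q₀ := by
        refine path_append s r (hp.take i) (hp.drop j) ?_
        intro x hx y hy
        rcases Nat.eq_zero_or_pos i with hi0 | hi0
        · rw [hi0] at hx; simp at hx
        rw [List.getLast?_take, if_neg (by omega : ¬ i = 0),
          List.getElem?_eq_getElem (by omega : i - 1 < p.length)] at hx
        rw [List.head?_drop, List.getElem?_eq_getElem hj] at hy
        simp only [Option.some_or, Option.or_some, Option.some.injEq] at hx hy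
        subst hx; subst hy
        have hc := List.isChain_iff_getElem.mp hp (i - 1) (by omega)
        have hgi : p[i - 1 + 1]'(by omega) = p[i] := by simp [Nat.sub_add_cancel hi0]
        rw [hc, hgi, hs]
      have hq₀head : ∀ e, p.head? = some e → ∃ e', q₀.head? = some e' ∧ s e' = s e := by
        intro e he
        rcases Nat.eq_zero_or_pos i with hi0 | hi0
        · refine ⟨p[j], ?_, ?_⟩
          · rw [hq₀, hi0, List.take_zero, List.nil_append, List.head?_drop,
              List.getElem?_eq_getElem hj]
          · have h0 : p[i]? = some e := by
              rw [hi0, ← List.head?_eq_getElem?]; exact he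
            rw [List.getElem?_eq_getElem hi] at h0
            rw [← hs, Option.some.inj h0]
        · refine ⟨e, ?_, rfl⟩
          rw [hq₀, List.head?_append]
          have : (p.take i).head? = some e := by
            rw [List.head?_eq_getElem?, List.getElem?_take, if_pos hi0,
              ← List.head?_eq_getElem?]
            exact he
          rw [this]; rfl
      have hq₀last : q₀.getLast? = p.getLast? := by
        rw [hq₀, List.getLast?_append]
        have h1 : (p.drop j).getLast? = p.getLast? := by
          rw [List.getLast?_eq_getElem?, List.getLast?_eq_getElem?, List.getElem?_drop,
            List.length_drop]
          congr 1
          omega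
        rw [h1]
        obtain ⟨z, hz⟩ := Option.isSome_iff_exists.mp (List.getLast?_isSome.mpr hne)
        rw [hz]; rfl
      have hq₀mem : ∀ e ∈ q₀, e ∈ p := by
        intro e he
        rcases List.mem_append.mp he with h | h
        · exact List.take_subset _ _ h
        · exact List.drop_subset _ _ h
      obtain ⟨q, hq1, hq2, hq3, hq4, hq5, hq6⟩ := ih q₀ (by omega) hq₀path hq₀ne
      refine ⟨q, hq1, hq2, hq3, ?_, hq5.trans hq₀last, fun e he => hq₀mem e (hq6 e he)⟩
      intro e he
      obtain ⟨e'', he''1, he''2⟩ := hq₀head e he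
      obtain ⟨e', he'1, he'2⟩ := hq4 e'' he''1
      exact ⟨e', he'1, he'2.trans he''2⟩
    have hlen : (List.map s p).length = p.length := List.length_map _
    have hab' : s (p[a.val]'(by omega)) = s (p[b.val]'(by omega)) := by
      simpa [List.get_eq_getElem, List.getElem_map] using hab
    rcases lt_or_gt_of_ne (fun h => hne' (Fin.ext h)) with h | h
    · exact hmain a.val b.val (by omega) (by omega) h hab'
    · exact hmain b.val a.val (by omega) (by omega) h hab'.symm

/-- The range of an edge of a cycle is a vertex of the cycle. -/
private lemma range_mem_of_cycle {c : List E} (hc : IsCycle s r c) {e : E} (he : e ∈ c) :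
    r e ∈ cycleVerts s c := by
  obtain ⟨c₁, c₂, hceq⟩ := List.append_of_mem he
  subst hceq
  rcases c₂ with _ | ⟨f, t⟩
  · obtain ⟨u, hu1, hu2⟩ := hc.2.1
    obtain ⟨g, hg1, hg2⟩ := hu1
    obtain ⟨l0, hl1, hl2⟩ := hu2
    have hlast : (c₁ ++ [e]).getLast? = some e := by
      rw [List.getLast?_append]; rfl
    rw [hlast] at hl1
    have hle : l0 = e := Option.some.inj hl1.symm
    subst hle
    exact ⟨g, List.mem_of_mem_head? hg1, by rw [hg2, ← hl2]⟩
  · have hchain := (List.isChain_append.mp hc.1).2.1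
    have hrel := (List.isChain_cons_cons.mp hchain).1
    exact ⟨f, by simp, hrel.symm⟩

/-- An arc of a cycle: a path inside the cycle from one vertex of the cycle to
another (distinct) vertex of the cycle, with distinct sources not containing the
target vertex. -/
private lemma cycle_arc {c : List E} (hc : IsCycle s r c) {y v : V}
    (hy : y ∈ cycleVerts s c) (hv : v ∈ cycleVerts s c) (hyv : y ≠ v) :
    ∃ A : List E, A ≠ [] ∧ IsPath s r A ∧ StartsAt s A y ∧ EndsAt r A v ∧
      (A.map s).Nodup ∧ (∀ f ∈ A, f ∈ c) ∧ v ∉ A.map s := by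
  obtain ⟨hpath, ⟨u, hstart, hend⟩, hnodup⟩ := hc
  obtain ⟨e, hec, hey⟩ := hy
  obtain ⟨c₁, c₂, hceq⟩ := List.append_of_mem hec
  subst hceq
  obtain ⟨g, hg1, hg2⟩ := hstart
  obtain ⟨l0, hl1, hl2⟩ := hend
  have hchain1 : IsPath s r c₁ := (List.isChain_append.mp hpath).1
  have hchain2 : IsPath s r (e :: c₂) := (List.isChain_append.mp hpath).2.1
  have hjunc := (List.isChain_append.mp hpath).2.2
  have hlast2 : (e :: c₂).getLast? = some l0 := by
    rw [List.getLast?_append] at hl1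
    rcases h : (e :: c₂).getLast? with _ | z
    · have := List.getLast?_isSome.mpr (List.cons_ne_nil e c₂)
      rw [h] at this; simp at this
    · rw [h] at hl1; exact hl1
  -- the rotated cycle starting at y
  have hrot : IsPath s r ((e :: c₂) ++ c₁) := by
    refine path_append s r hchain2 hchain1 ?_
    intro x hx z hz
    rw [hlast2] at hx
    have hx' : x = l0 := Option.some.inj hx.symm
    subst hx'
    have hgz : g = z := by
      rcases c₁ with _ | ⟨z', t⟩
      · simp at hz
      · rw [List.head?_append] at hg1
        simp only [List.head?_cons] at hg1 hz
        rw [← Option.some.inj hg1, Option.some.inj hz]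
    rw [hl2, ← hg2, hgz]
  have hrotend : ∃ l', ((e :: c₂) ++ c₁).getLast? = some l' ∧ r l' = y := by
    rcases h1 : c₁ with _ | ⟨z', t⟩
    · subst h1
      refine ⟨l0, ?_, ?_⟩
      · rw [List.append_nil]; exact hlast2
      · have hge : g = e := by
          simp only [List.nil_append, List.head?_cons] at hg1
          exact (Option.some.inj hg1).symm
        rw [hl2, ← hg2, hge, hey]
    · subst h1
      obtain ⟨w', hw'⟩ : ∃ w', (z' :: t).getLast? = some w' :=
        ⟨(z' :: t).getLast (by simp), List.getLast?_eq_getLast _⟩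
      refine ⟨w', ?_, ?_⟩
      · rw [List.getLast?_append, hw']; rfl
      · rw [hjunc w' hw' e rfl, hey]
  have hrotperm : List.Perm ((e :: (c₂ ++ c₁)).map s) ((c₁ ++ e :: c₂).map s) :=
    List.Perm.map s ((List.Perm.cons e List.perm_append_comm).trans List.perm_middle.symm)
  have hrotnodup : ((e :: (c₂ ++ c₁)).map s).Nodup := hrotperm.nodup_iff.mpr hnodup
  -- locate v inside the rotated cycle
  obtain ⟨f, hf, hfv⟩ := hv
  have hfe : f ≠ e := fun h => hyv (by rw [← hey, ← hfv, h])
  have hfrot : f ∈ c₂ ++ c₁ := by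
    have : f ∈ e :: (c₂ ++ c₁) := by
      rcases List.mem_append.mp hf with h | h
      · simp [h]
      · rcases List.mem_cons.mp h with h' | h'
        · simp [h']
        · simp [h']
    exact (List.mem_cons.mp this).resolve_left hfe
  obtain ⟨t₁, t₂, ht⟩ := List.append_of_mem hfrot
  have hshape : (e :: c₂) ++ c₁ = (e :: t₁) ++ f :: t₂ := by
    rw [List.cons_append, ht]; rfl
  refine ⟨e :: t₁, by simp, ?_, ⟨e, rfl, hey⟩, ?_, ?_, ?_, ?_⟩
  · exact (List.isChain_append.mp (hshape ▸ hrot)).1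
  · obtain ⟨g', hg'⟩ : ∃ g', (e :: t₁).getLast? = some g' :=
      ⟨(e :: t₁).getLast (by simp), List.getLast?_eq_getLast _⟩
    refine ⟨g', hg', ?_⟩
    have := (List.isChain_append.mp (hshape ▸ hrot)).2.2 g' hg' f rfl
    rw [this, hfv]
  · have : ((e :: t₁) ++ f :: t₂).map s = (e :: t₁).map s ++ (f :: t₂).map s :=
      List.map_append
    have h2 : (((e :: t₁) ++ f :: t₂).map s).Nodup := by
      rw [List.cons_append, ← ht]; exact hrotnodup
    rw [this] at h2
    exact (List.nodup_append.mp h2).1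
  · intro f' hf'
    have : f' ∈ (c₁ ++ e :: c₂) := by
      rcases List.mem_cons.mp hf' with h | h
      · rw [h]; simp
      · have : f' ∈ c₂ ++ c₁ := ht ▸ List.mem_append_left _ h
        rcases List.mem_append.mp this with h' | h'
        · simp [h']
        · simp [h']
    exact this
  · -- v ∉ (e :: t₁).map s
    have h2 : (((e :: t₁) ++ f :: t₂).map s).Nodup := by
      rw [List.cons_append, ← ht]; exact hrotnodup
    rw [List.map_append] at h2
    have hdisj := (List.nodup_append'.mp h2).2.2
    intro hvmem
    exact hdisj hvmem (by rw [← hfv]; simp)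

/-- Key lemma: if the cycles of the graph are separated, then the first edge of any
path joining two vertices of a cycle `c` belongs to `c`. -/
private lemma head_mem_cycle (hsep : SeparatedCycles s r) {c : List E} (hc : IsCycle s r c) :
    ∀ (n : ℕ) (p : List E), p.length ≤ n → p ≠ [] → IsPath s r p →
    ∀ v x : V, StartsAt s p v → v ∈ cycleVerts s c → EndsAt r p x → x ∈ cycleVerts s c →
    ∀ e, p.head? = some e → e ∈ c := by
  intro n
  induction n with
  | zero =>
    intro p hl hne
    exact absurd (List.eq_nil_of_length_eq_zero (Nat.le_zero.mp hl)) hne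
  | succ n ih =>
    intro p hl hne hp v x hsv hvc hex hxc e he
    have hpe : p = e :: p.tail := by
      rcases p with _ | ⟨a, t⟩
      · exact absurd rfl hne
      · simp only [List.head?_cons, Option.some.injEq] at he
        rw [he]; rfl
    have hsev : s e = v := by
      obtain ⟨e₀, he₀1, he₀2⟩ := hsv
      rw [he] at he₀1
      rw [← Option.some.inj he₀1] at he₀2
      exact he₀2
    by_cases hcase : ∃ f ∈ p.tail, s f ∈ cycleVerts s c
    · obtain ⟨f, hf, hfc⟩ := hcase
      obtain ⟨t₁, t₂, ht⟩ := List.append_of_mem hf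
      have hpe2 : p = (e :: t₁) ++ f :: t₂ := by
        rw [hpe, ht]; rfl
      have hchaina : IsPath s r (e :: t₁) := (List.isChain_append.mp (hpe2 ▸ hp)).1
      have hjunc := (List.isChain_append.mp (hpe2 ▸ hp)).2.2
      obtain ⟨g, hg⟩ : ∃ g, (e :: t₁).getLast? = some g :=
        ⟨(e :: t₁).getLast (by simp), List.getLast?_eq_getLast _⟩
      have hends : EndsAt r (e :: t₁) (s f) := ⟨g, hg, hjunc g hg f rfl⟩
      have hlen : (e :: t₁).length ≤ n := by
        have : p.length = (e :: t₁).length + (f :: t₂).length := by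
          rw [hpe2, List.length_append]
        simp only [List.length_cons] at this ⊢
        omega
      exact ih (e :: t₁) hlen (by simp) hchaina v (s f) ⟨e, rfl, hsev⟩ hvc hends hfc e rfl
    · push_neg at hcase
      obtain ⟨q, hqne, hqpath, hqnodup, hqhead, hqlast, hqmem⟩ :=
        simplify_path_aux s r p.length p le_rfl hp hne
      obtain ⟨e', he'1, he'2⟩ := hqhead e he
      have hv' : s e' = v := he'2.trans hsev
      have hqstart : StartsAt s q v := ⟨e', he'1, hv'⟩
      have hqend : EndsAt r q x := by
        obtain ⟨l0, h1, h2⟩ := hex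
        exact ⟨l0, by rw [hqlast]; exact h1, h2⟩
      have hkey : ∀ f ∈ q, s f ∈ cycleVerts s c → f = e := by
        intro f hf hfc
        have hfp := hqmem f hf
        rw [hpe] at hfp
        rcases List.mem_cons.mp hfp with h | h
        · exact h
        · exact absurd hfc (hcase f h)
      have he'q : e' ∈ q := List.mem_of_mem_head? he'1
      by_cases hxv : x = v
      · have hqcyc : IsCycle s r q := ⟨hqpath, ⟨v, hqstart, hxv ▸ hqend⟩, hqnodup⟩
        have hset := hsep q c hqcyc hc ⟨v, ⟨e', he'q, hv'⟩, hvc⟩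
        have he'c : e' ∈ c := by
          have : e' ∈ {f | f ∈ c} := hset ▸ (he'q : e' ∈ {f | f ∈ q})
          exact this
        have : e' = e := hkey e' he'q (by rw [hv']; exact hvc)
        rwa [← this]
      · obtain ⟨A, hAne, hApath, hAstart, hAend, hAnodup, hAmem, hAv⟩ :=
          cycle_arc s r hc hxc hvc hxv
        have hDpath : IsPath s r (A ++ q) := by
          refine path_append s r hApath hqpath ?_
          intro z hz y' hy'
          obtain ⟨l0, h1, h2⟩ := hAend
          rw [h1] at hz
          rw [he'1] at hy'
          rw [← Option.some.inj hz, ← Option.some.inj hy', h2, hv']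
        have hDstart : StartsAt s (A ++ q) x := by
          obtain ⟨g, h1, h2⟩ := hAstart
          exact ⟨g, by rw [List.head?_append, h1]; rfl, h2⟩
        have hDend : EndsAt r (A ++ q) x := by
          obtain ⟨l0, h1, h2⟩ := hqend
          exact ⟨l0, by rw [List.getLast?_append, h1]; rfl, h2⟩
        have hDnodup : ((A ++ q).map s).Nodup := by
          rw [List.map_append, List.nodup_append']
          refine ⟨hAnodup, hqnodup, ?_⟩
          intro w hwA hwq
          obtain ⟨f, hfq, hfw⟩ := List.mem_map.mp hwq
          obtain ⟨f', hf'A, hf'w⟩ := List.mem_map.mp hwA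
          have hwc : w ∈ cycleVerts s c := by
            rw [← hf'w]
            exact ⟨f', hAmem f' hf'A, rfl⟩
          have hfe : f = e := hkey f hfq (by rw [hfw]; exact hwc)
          have hwv : w = v := by rw [← hfw, hfe, hsev]
          exact hAv (hwv ▸ hwA)
        have hDcyc : IsCycle s r (A ++ q) := ⟨hDpath, ⟨x, hDstart, hDend⟩, hDnodup⟩
        have hxD : x ∈ cycleVerts s (A ++ q) := by
          obtain ⟨g, h1, h2⟩ := hAstart
          exact ⟨g, List.mem_append_left _ (List.mem_of_mem_head? h1), h2⟩
        have hset := hsep (A ++ q) c hDcyc hc ⟨x, hxD, hxc⟩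
        have he'c : e' ∈ c := by
          have : e' ∈ {f | f ∈ c} :=
            hset ▸ (List.mem_append_right _ he'q : e' ∈ {f | f ∈ A ++ q})
          exact this
        have : e' = e := hkey e' he'q (by rw [hv']; exact hvc)
        rwa [← this]

/-- Under separation of cycles, every edge of a path joining two vertices of a
cycle `c` belongs to `c`. -/
private lemma edges_mem_cycle (hsep : SeparatedCycles s r) {c : List E} (hc : IsCycle s r c) :
    ∀ (n : ℕ) (p : List E), p.length ≤ n → p ≠ [] → IsPath s r p →
    ∀ v x : V, StartsAt s p v → v ∈ cycleVerts s c → EndsAt r p x → x ∈ cycleVerts s c →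
    ∀ e ∈ p, e ∈ c := by
  intro n
  induction n with
  | zero =>
    intro p hl hne
    exact absurd (List.eq_nil_of_length_eq_zero (Nat.le_zero.mp hl)) hne
  | succ n ih =>
    intro p hl hne hp v x hsv hvc hex hxc
    rcases p with _ | ⟨e, t⟩
    · exact absurd rfl hne
    have heC : e ∈ c :=
      head_mem_cycle s r hsep hc (n + 1) (e :: t) hl hne hp v x hsv hvc hex hxc e rfl
    rcases t with _ | ⟨f, t'⟩
    · intro g hg
      rw [List.mem_singleton.mp hg]
      exact heC
    · have hreC : r e ∈ cycleVerts s c := range_mem_of_cycle s r hc heC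
      have ht_path : IsPath s r (f :: t') := hp.tail
      have hstart : StartsAt s (f :: t') (r e) := ⟨f, rfl, ((List.isChain_cons_cons.mp hp).1).symm⟩
      have hend : EndsAt r (f :: t') x := by
        obtain ⟨l0, h1, h2⟩ := hex
        exact ⟨l0, by rw [← List.getLast?_cons_cons]; exact h1, h2⟩
      have ihall := ih (f :: t') (by simp only [List.length_cons] at hl ⊢; omega) (by simp)
        ht_path (r e) x hstart hreC hend hxc
      intro g hg
      rcases List.mem_cons.mp hg with h | h
      · rw [h]; exact heC
      · exact ihall g h

/-- Lemma 2 of the paper.  Suppose any two distinct cycles of `Γ`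
have no common vertex.  If `C'` and `C''` are cycles with `C' ⟹ C''` and
`C'' ⟹ C'`, then `C' = C''` (they have the same edges). -/
theorem cycles_connected_both_ways_eq
    (hsep : SeparatedCycles s r) (c c' : List E)
    (hc : IsCycle s r c) (hc' : IsCycle s r c')
    (h₁ : CycleConnects s r c c') (h₂ : CycleConnects s r c' c) :
    {e | e ∈ c} = {e | e ∈ c'} := by
  obtain ⟨v, w, hvc, hwc', h₁'⟩ := h₁
  obtain ⟨v', w', hv'c', hw'c, h₂'⟩ := h₂
  rcases h₁' with rfl | ⟨p, hpne, hpp, hps, hpe⟩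
  · exact hsep c c' hc hc' ⟨v, hvc, hwc'⟩
  rcases h₂' with rfl | ⟨q, hqne, hqp, hqs, hqe⟩
  · exact hsep c c' hc hc' ⟨v', hw'c, hv'c'⟩
  by_cases hwv' : w = v'
  · have hR : IsPath s r (p ++ q) := by
      refine path_append s r hpp hqp ?_
      intro z hz y' hy'
      obtain ⟨l0, h1, h2⟩ := hpe
      obtain ⟨g, hg1, hg2⟩ := hqs
      rw [h1] at hz; rw [hg1] at hy'
      rw [← Option.some.inj hz, ← Option.some.inj hy', h2, hg2, hwv']
    have hRne : p ++ q ≠ [] := by simp [hpne]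
    have hRstart : StartsAt s (p ++ q) v := by
      obtain ⟨g, h1, h2⟩ := hps
      exact ⟨g, by rw [List.head?_append, h1]; rfl, h2⟩
    have hRend : EndsAt r (p ++ q) w' := by
      obtain ⟨l0, h1, h2⟩ := hqe
      exact ⟨l0, by rw [List.getLast?_append, h1]; rfl, h2⟩
    have hall := edges_mem_cycle s r hsep hc (p ++ q).length (p ++ q) le_rfl hRne hR v w'
      hRstart hvc hRend hw'c
    obtain ⟨g, hg1, hg2⟩ := hqs
    have hgc : g ∈ c := hall g (List.mem_append_right _ (List.mem_of_mem_head? hg1))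
    exact hsep c c' hc hc' ⟨v', ⟨g, hgc, hg2⟩, hv'c'⟩
  · obtain ⟨A, hAne, hApath, hAstart, hAend, _, hAmem, _⟩ :=
      cycle_arc s r hc' hwc' hv'c' hwv'
    have hAq : IsPath s r (A ++ q) := by
      refine path_append s r hApath hqp ?_
      intro z hz y' hy'
      obtain ⟨l0, h1, h2⟩ := hAend
      obtain ⟨g, hg1, hg2⟩ := hqs
      rw [h1] at hz; rw [hg1] at hy'
      rw [← Option.some.inj hz, ← Option.some.inj hy', h2, hg2]
    have hR : IsPath s r (p ++ (A ++ q)) := by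
      refine path_append s r hpp hAq ?_
      intro z hz y' hy'
      obtain ⟨l0, h1, h2⟩ := hpe
      obtain ⟨g, hg1, hg2⟩ := hAstart
      rw [h1] at hz
      rw [List.head?_append, hg1] at hy'
      rw [← Option.some.inj hz, ← Option.some.inj (hy' : some g = some y'), h2, hg2]
    have hRne : p ++ (A ++ q) ≠ [] := by simp [hpne]
    have hRstart : StartsAt s (p ++ (A ++ q)) v := by
      obtain ⟨g, h1, h2⟩ := hps
      exact ⟨g, by rw [List.head?_append, h1]; rfl, h2⟩
    have hRend : EndsAt r (p ++ (A ++ q)) w' := by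
      obtain ⟨l0, h1, h2⟩ := hqe
      refine ⟨l0, ?_, h2⟩
      rw [List.getLast?_append, List.getLast?_append, h1]; rfl
    have hall := edges_mem_cycle s r hsep hc (p ++ (A ++ q)).length (p ++ (A ++ q)) le_rfl
      hRne hR v w' hRstart hvc hRend hw'c
    obtain ⟨g, hg1, hg2⟩ := hAstart
    have hgc : g ∈ c := hall g
      (List.mem_append_right _ (List.mem_append_left _ (List.mem_of_mem_head? hg1)))
    exact hsep c c' hc hc' ⟨w, ⟨g, hgc, hg2⟩, hwc'⟩

end LeavittSetup
end

section
/- Let Γ be a directed graph, let C₁ = (v₁,…,v_m; e₁,…,e_m) and C₂ = (w₁,…,w_k; f₁,…,f_k) be distinct cycles with common vertex v₁ = w₁, and set p = e₁…e_m, q = f₁…f_k, both closed paths based at v₁. Then the monoid homomorphism from the free monoid on two generators x, y to the monoid of closed paths based at v₁ (under concatenation) sending x ↦ p and y ↦ q is injective: if u₁ and u₂ are distinct words in x, y then the paths u₁(p,q) and u₂(p,q) are distinct. -/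
open scoped BigOperators

section LeavittSetup

variable {V E : Type}

variable (F : Type) [Field F]

variable (s r : E → V)

/-- A cycle is a nonempty list of edges. -/
lemma IsCycle.ne_nil {s r : E → V} {c : List E} (h : IsCycle s r c) : c ≠ [] := by
  obtain ⟨-, ⟨v, ⟨e, he, -⟩, -⟩, -⟩ := h
  intro hnil; rw [hnil] at he; simp at he

/-- A cycle cannot be a proper prefix of another cycle. -/
lemma cycle_not_prefix {s r : E → V} {a b : List E}
    (ha : IsCycle s r a) (hb : IsCycle s r b) (hne : a ≠ b) : ¬ a <+: b := by
  rintro ⟨t, rfl⟩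
  obtain ⟨hpa, ⟨v, ⟨e₁, he₁, hse₁⟩, ⟨eL, heL, hreL⟩⟩, hnda⟩ := ha
  obtain ⟨hpb, -, hndb⟩ := hb
  cases t with
  | nil => exact hne (by simp)
  | cons f t' =>
    -- the chain condition across the junction gives `r eL = s f`
    have hchain := (List.isChain_append.1 hpb).2.2 eL heL f rfl
    have hsf : s f = v := by rw [← hchain, hreL]
    have hmem : e₁ ∈ a := by
      cases a with
      | nil => simp at he₁
      | cons x xs => simp only [List.head?_cons, Option.some.injEq] at he₁; simp [he₁]
    have hnd := hndb
    rw [List.map_append, List.nodup_append] at hnd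
    exact hnd.2.2 _ (List.mem_map_of_mem (f := s) hmem) (s f) (by simp) (by rw [hse₁, hsf])

/-- Let `C₁`, `C₂` be distinct cycles with a common starting vertex,
and let `p`, `q` be the closed paths traversing them once from that vertex.  Then the
monoid homomorphism from the free monoid on two generators to closed paths based at
that vertex (words in the letters `x ↦ p`, `y ↦ q`, under concatenation) is
injective: distinct words yield distinct paths. -/
theorem word_substitution_injective
    (es₁ es₂ : List E) (h₁ : IsCycle s r es₁) (h₂ : IsCycle s r es₂)
    (hdistinct : {e | e ∈ es₁} ≠ {e | e ∈ es₂})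
    (hcommon : ∃ e₁ e₂, es₁.head? = some e₁ ∧ es₂.head? = some e₂ ∧ s e₁ = s e₂) :
    Function.Injective
      (fun u : List Bool => (u.map (fun b => if b then es₁ else es₂)).flatten) := by
  have hne₁ : es₁ ≠ [] := h₁.ne_nil
  have hne₂ : es₂ ≠ [] := h₂.ne_nil
  have hlistne : es₁ ≠ es₂ := fun h => hdistinct (by rw [h])
  have key : ∀ c d : List E, IsCycle s r c → IsCycle s r d → c ≠ d →
      ∀ A B : List E, c ++ A ≠ d ++ B := by
    intro c d hc hd hcd A B h
    have h1 : c <+: d ++ B := h ▸ ⟨A, rfl⟩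
    have h2 : d <+: d ++ B := ⟨B, rfl⟩
    rcases List.prefix_or_prefix_of_prefix h1 h2 with hp | hp
    · exact cycle_not_prefix hc hd hcd hp
    · exact cycle_not_prefix hd hc (Ne.symm hcd) hp
  intro u₁ u₂
  induction u₁ generalizing u₂ with
  | nil =>
    intro h
    cases u₂ with
    | nil => rfl
    | cons b t =>
      exfalso
      simp only [List.map_nil, List.flatten_nil, List.map_cons, List.flatten_cons] at h
      cases b
      · exact hne₂ (List.append_eq_nil_iff.mp h.symm).1
      · exact hne₁ (List.append_eq_nil_iff.mp h.symm).1
  | cons a t₁ ih =>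
    intro h
    cases u₂ with
    | nil =>
      exfalso
      simp only [List.map_nil, List.flatten_nil, List.map_cons, List.flatten_cons] at h
      cases a
      · exact hne₂ (List.append_eq_nil_iff.mp h).1
      · exact hne₁ (List.append_eq_nil_iff.mp h).1
    | cons b t₂ =>
      simp only [List.map_cons, List.flatten_cons] at h
      cases a <;> cases b <;> simp only [if_pos, if_neg, Bool.false_eq_true,
        ite_true, ite_false] at h
      · rw [ih (List.append_cancel_left h)]
      · exact absurd h (key es₂ es₁ h₂ h₁ (Ne.symm hlistne) _ _)
      · exact absurd h (key es₁ es₂ h₁ h₂ hlistne _ _)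
      · rw [ih (List.append_cancel_left h)]

end LeavittSetup
end

section
/- Let Γ be a directed graph in which any two distinct cycles have no common vertex, and let C′, C″ be cycles of Γ. Suppose there exists a closed path that visits a vertex of C′ and a vertex of C″, and let t = e₁…eₙ be such a closed path of minimal length. Then the source vertices s(e₁),…,s(eₙ) are pairwise distinct, i.e., t is a cycle. -/
open scoped BigOperators

section LeavittSetup

variable {V E : Type}

variable (F : Type) [Field F]

variable (s r : E → V)

private theorem gE {α : Type} (l : List α) {a b : ℕ} (h : a = b)
    {ha : a < l.length} : l[a]'ha = l[b]'(h ▸ ha) := by subst h; rfl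


/-- from the proof of Lemma 2.  Suppose distinct cycles of `Γ` have no
common vertex.  Let `C'`, `C''` be cycles, and let `t` be a closed path of minimal
length among closed paths visiting a vertex of `C'` and a vertex of `C''`.  Then the
sources of the edges of `t` are pairwise distinct, i.e. `t` is a cycle. -/
theorem minimal_closed_path_visiting_two_cycles_is_cycle
    (hsep : SeparatedCycles s r) (c c' : List E)
    (hc : IsCycle s r c) (hc' : IsCycle s r c')
    (t : List E) (ht : IsPath s r t) (htc : IsClosedPath s r t)
    (hvisit : (cycleVerts s t ∩ cycleVerts s c).Nonempty ∧
      (cycleVerts s t ∩ cycleVerts s c').Nonempty)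
    (hmin : ∀ t' : List E, IsPath s r t' → IsClosedPath s r t' →
      (cycleVerts s t' ∩ cycleVerts s c).Nonempty →
      (cycleVerts s t' ∩ cycleVerts s c').Nonempty →
      t.length ≤ t'.length) :
    (t.map s).Nodup := by
  classical
  by_contra hnd
  obtain ⟨v0, hstart, hend⟩ := htc
  obtain ⟨e0, he0, hse0⟩ := hstart
  obtain ⟨eL, heL, hreL⟩ := hend
  have htne : t ≠ [] := by rintro rfl; simp at he0
  have hn0 : 0 < t.length := List.length_pos_iff.mpr htne
  have hchain : ∀ k, ∀ h : k + 1 < t.length, r (t[k]'(by omega)) = s (t[k+1]'h) := by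
    intro k h
    have := List.isChain_iff_getElem.mp ht k (by omega)
    simpa [List.get_eq_getElem] using this
  -- minimal-distance duplicate of sources
  have hPex : ∃ d : ℕ, 0 < d ∧ ∃ i : ℕ, ∃ h : i + d < t.length,
      s (t[i]'(by omega)) = s (t[i+d]'h) := by
    rw [List.nodup_iff_injective_get] at hnd
    simp only [Function.Injective, not_forall] at hnd
    obtain ⟨a, b, hab, hne⟩ := hnd
    have hlm : (t.map s).length = t.length := List.length_map ..
    simp only [List.get_eq_getElem, List.getElem_map] at hab
    rcases lt_or_gt_of_ne (fun h : a.1 = b.1 => hne (Fin.ext h)) with h | h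
    · refine ⟨b.1 - a.1, by omega, a.1, by omega, ?_⟩
      rw [gE t (show a.1 + (b.1 - a.1) = b.1 by omega)]
      exact hab
    · refine ⟨a.1 - b.1, by omega, b.1, by omega, ?_⟩
      rw [gE t (show b.1 + (a.1 - b.1) = a.1 by omega)]
      exact hab.symm
  obtain ⟨d0, ⟨hd0pos, i, hilt, hdup⟩, hd0min⟩ :
      ∃ d, (0 < d ∧ ∃ i : ℕ, ∃ h : i + d < t.length,
        s (t[i]'(by omega)) = s (t[i+d]'h)) ∧
        ∀ d', d' < d → ¬(0 < d' ∧ ∃ i : ℕ, ∃ h : i + d' < t.length,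
          s (t[i]'(by omega)) = s (t[i+d']'h)) :=
    ⟨Nat.find hPex, Nat.find_spec hPex, fun d' h => Nat.find_min hPex h⟩
  have hi : i < t.length := by omega
  -- t = A ++ (t2 ++ B)
  have hteq : t.take i ++ ((t.drop i).take d0 ++ t.drop (i + d0)) = t := by
    rw [← List.drop_drop, List.take_append_drop, List.take_append_drop]
  have hlt2 : ((t.drop i).take d0).length = d0 := by
    rw [List.length_take, List.length_drop]; omega
  have ht2ne : (t.drop i).take d0 ≠ [] := by
    intro h; rw [h] at hlt2; simp at hlt2; omega
  have hBne : t.drop (i + d0) ≠ [] := by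
    intro h
    have := congrArg List.length h
    rw [List.length_drop] at this; simp at this; omega
  have ht2get : ∀ k, ∀ h : k < d0,
      ((t.drop i).take d0)[k]'(by omega) = t[i+k]'(by omega) := by
    intro k h
    rw [List.getElem_take, List.getElem_drop]
  -- t2 is a path
  have ht2path : IsPath s r ((t.drop i).take d0) :=
    ht.infix ((List.take_prefix _ _).isInfix.trans (List.drop_suffix _ _).isInfix)
  have ht2closed : IsClosedPath s r ((t.drop i).take d0) := by
    refine ⟨s (t[i]'hi), ⟨((t.drop i).take d0).head ht2ne,
      List.head?_eq_head ht2ne, ?_⟩,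
      ⟨((t.drop i).take d0).getLast ht2ne, List.getLast?_eq_getLast ht2ne, ?_⟩⟩
    · rw [List.head_eq_getElem, ht2get 0 (by omega), gE t (Nat.add_zero i)]
    · rw [List.getLast_eq_getElem,
        gE ((t.drop i).take d0) (show ((t.drop i).take d0).length - 1 = d0 - 1 by omega),
        ht2get (d0 - 1) (by omega)]
      have h1 : i + (d0 - 1) + 1 < t.length := by omega
      rw [hchain (i + (d0 - 1)) h1, gE t (show i + (d0 - 1) + 1 = i + d0 by omega)]
      exact hdup.symm
  have ht2nodup : (((t.drop i).take d0).map s).Nodup := by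
    rw [List.nodup_iff_injective_get]
    intro a b hab
    by_contra hne
    have ha : a.1 < d0 := by have := a.2; simp [hlt2] at this; omega
    have hb : b.1 < d0 := by have := b.2; simp [hlt2] at this; omega
    simp only [List.get_eq_getElem, List.getElem_map] at hab
    rw [List.getElem_take, List.getElem_drop, List.getElem_take, List.getElem_drop] at hab
    rcases lt_or_gt_of_ne (fun h : a.1 = b.1 => hne (Fin.ext h)) with h | h
    · refine hd0min (b.1 - a.1) (by omega) ⟨by omega, i + a.1, by omega, ?_⟩
      rw [gE t (show i + a.1 + (b.1 - a.1) = i + b.1 by omega)]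
      exact hab
    · refine hd0min (a.1 - b.1) (by omega) ⟨by omega, i + b.1, by omega, ?_⟩
      rw [gE t (show i + b.1 + (a.1 - b.1) = i + a.1 by omega)]
      exact hab.symm
  have hD : IsCycle s r ((t.drop i).take d0) := ⟨ht2path, ht2closed, ht2nodup⟩
  -- t1 = take i ++ drop (i+d0) is a path
  have ht1path : IsPath s r (t.take i ++ t.drop (i + d0)) := by
    show List.IsChain (fun e f => r e = s f) _
    rw [List.isChain_append]
    refine ⟨ht.prefix (List.take_prefix _ _), ht.suffix (List.drop_suffix _ _), ?_⟩
    intro x hx y hy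
    have hAne : t.take i ≠ [] := by rintro h; rw [h] at hx; simp at hx
    have hi1 : 1 ≤ i := by
      by_contra h
      exact hAne (by rw [show i = 0 by omega]; simp)
    have hlA : (t.take i).length = i := by rw [List.length_take]; omega
    have hxval : x = t[i-1]'(by omega) := by
      rw [List.getLast?_eq_getLast hAne] at hx
      simp only [Option.mem_def, Option.some_inj] at hx
      rw [← hx, List.getLast_eq_getElem, gE (t.take i) (show (t.take i).length - 1 = i - 1 by omega),
        List.getElem_take]
    have hyval : y = t[i+d0]'(by omega) := by
      rw [List.head?_eq_head hBne] at hy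
      simp only [Option.mem_def, Option.some_inj] at hy
      rw [← hy, List.head_eq_getElem, List.getElem_drop, gE t (Nat.add_zero (i + d0))]
    rw [hxval, hyval]
    have h1 : (i - 1) + 1 < t.length := by omega
    have h2 := hchain (i - 1) h1
    rw [gE t (show i - 1 + 1 = i by omega)] at h2
    rw [h2, ← hdup]
  have ht1closed : IsClosedPath s r (t.take i ++ t.drop (i + d0)) := by
    refine ⟨v0, ?_, ?_⟩
    · rcases Nat.eq_zero_or_pos i with hi0 | hip
      · subst hi0
        refine ⟨t[0+d0]'(by omega), ?_, ?_⟩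
        · rw [List.take_zero, List.nil_append, List.head?_eq_head hBne,
            List.head_eq_getElem, List.getElem_drop, gE t (Nat.add_zero (0 + d0))]
        · rw [← hdup]
          have h0 : t[0]'hn0 = e0 := by
            rw [List.head?_eq_head htne] at he0
            rw [← List.head_eq_getElem htne]
            exact Option.some_inj.mp he0
          rw [h0, hse0]
      · have hAne : t.take i ≠ [] := by
          intro h
          have h' := congrArg List.length h
          rw [List.length_take] at h'
          simp only [List.length_nil] at h'
          omega
        refine ⟨e0, ?_, hse0⟩
        have h1 : (t.take i ++ t.drop (i + d0)).head? = (t.take i).head? := by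
          rw [List.head?_append, List.head?_eq_head hAne]
          simp
        have h2 : t.head? = (t.take i).head? := by
          conv_lhs => rw [← hteq]
          rw [List.head?_append, List.head?_eq_head hAne]
          simp
        rw [h1, ← h2, he0]
    · refine ⟨eL, ?_, hreL⟩
      have h1 : (t.take i ++ t.drop (i + d0)).getLast? = (t.drop (i + d0)).getLast? := by
        rw [List.getLast?_append, List.getLast?_eq_getLast hBne]
        simp
      have h2 : t.getLast? = (t.drop (i + d0)).getLast? := by
        conv_lhs => rw [← hteq]
        rw [List.getLast?_append, List.getLast?_append, List.getLast?_eq_getLast hBne]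
        simp
      rw [h1, ← h2, heL]
  -- membership split
  have hmem : ∀ e : E, e ∈ t → e ∈ t.take i ++ t.drop (i + d0) ∨ e ∈ (t.drop i).take d0 := by
    intro e he
    conv at he => rw [← hteq]
    simp only [List.mem_append] at he ⊢
    tauto
  -- the shared vertex u = s t[i] lies in both V(t1) and V(t2)
  have hu1 : s (t[i]'hi) ∈ cycleVerts s (t.take i ++ t.drop (i + d0)) := by
    refine ⟨t[i+d0]'(by omega), ?_, hdup.symm⟩
    refine List.mem_append.mpr (Or.inr ?_)
    have h0 : (t.drop (i + d0))[0]'(by rw [List.length_drop]; omega) = t[i+d0]'(by omega) := by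
      rw [List.getElem_drop, gE t (Nat.add_zero (i + d0))]
    rw [← h0]
    exact List.getElem_mem _
  have hu2 : s (t[i]'hi) ∈ cycleVerts s ((t.drop i).take d0) := by
    refine ⟨((t.drop i).take d0)[0]'(by omega), List.getElem_mem _, ?_⟩
    rw [ht2get 0 (by omega), gE t (Nat.add_zero i)]
  -- t1 visits any cycle visited by t
  have key : ∀ C, IsCycle s r C → (cycleVerts s t ∩ cycleVerts s C).Nonempty →
      (cycleVerts s (t.take i ++ t.drop (i + d0)) ∩ cycleVerts s C).Nonempty := by
    rintro C hC ⟨v, hv, hvC⟩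
    obtain ⟨e, he, hev⟩ := hv
    rcases hmem e he with h1 | h2
    · exact ⟨v, ⟨e, h1, hev⟩, hvC⟩
    · have hsepd := hsep _ C hD hC ⟨v, ⟨e, h2, hev⟩, hvC⟩
      obtain ⟨e', he', hsu⟩ := hu2
      exact ⟨s (t[i]'hi), hu1, ⟨e', (Set.ext_iff.mp hsepd e').mp he', hsu⟩⟩
  have hle := hmin _ ht1path ht1closed (key c hc hvisit.1) (key c' hc' hvisit.2)
  rw [List.length_append, List.length_take, List.length_drop] at hle
  omega


end LeavittSetup
end

section
/- Let Γ be a directed graph containing two distinct cycles C₁ and C₂ with a common vertex v. Then the number of closed paths in Γ based at v of length at most n grows exponentially: there exist constants c > 1 and N such that for all n ≥ N the number of closed paths based at v of length ≤ n is at least cⁿ. -/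
open scoped BigOperators

section LeavittSetup

variable {V E : Type}

variable (F : Type) [Field F]

variable (s r : E → V)

lemma rotate_cycle {c : List E}
    (hpath : IsPath s r c) (hclosed : IsClosedPath s r c)
    {v : V} {e : E} (he : e ∈ c) (hse : s e = v) :
    ∃ p : List E, p ≠ [] ∧ IsPath s r p ∧ StartsAt s p v ∧ EndsAt r p v ∧ p.Perm c := by
  obtain ⟨a, b, rfl⟩ := List.append_of_mem he
  rw [IsPath, List.Chain', List.isChain_append] at hpath
  obtain ⟨ha, heb, hlink⟩ := hpath
  rcases eq_or_ne a [] with rfl | hane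
  · refine ⟨e :: b, by simp, heb, ⟨e, rfl, hse⟩, ?_, by simp⟩
    obtain ⟨w, ⟨e', he', hse'⟩, ⟨f, hf, hrf⟩⟩ := hclosed
    simp only [List.nil_append, List.head?_cons, Option.some.injEq] at he'
    subst he'
    exact ⟨f, by simpa using hf, by rw [hrf, ← hse']; exact hse⟩
  · refine ⟨(e :: b) ++ a, by simp, ?_, ⟨e, by simp, hse⟩, ?_, List.perm_append_comm⟩
    · rw [IsPath, List.Chain', List.isChain_append]
      refine ⟨heb, ha, ?_⟩
      intro x hx y hy
      obtain ⟨w, ⟨e', he', hse'⟩, ⟨f, hf, hrf⟩⟩ := hclosed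
      rw [List.head?_append_of_ne_nil _ hane] at he'
      rw [List.getLast?_append_of_ne_nil _ (by simp : (e :: b) ≠ [])] at hf
      rw [hx] at hf; rw [hy] at he'
      rw [Option.some_inj] at hf he'
      subst hf he'
      rw [hrf, ← hse']
    · obtain ⟨g, hg⟩ := List.getLast?_isSome.mpr hane |> Option.isSome_iff_exists.mp
      refine ⟨g, ?_, ?_⟩
      · rw [List.getLast?_append_of_ne_nil _ hane]; exact hg
      · have := hlink g hg e (by simp)
        rw [this, hse]

lemma not_prefix_of_closed {p q : List E} (hpq : p ≠ q)
    (hqpath : IsPath s r q) {v : V}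
    (hps : StartsAt s p v) (hpe : EndsAt r p v)
    (hnd : (q.map s).Nodup) : ¬ p <+: q := by
  rintro ⟨t, rfl⟩
  rcases eq_or_ne t [] with rfl | htne
  · simp at hpq
  · obtain ⟨x, t', rfl⟩ := List.exists_cons_of_ne_nil htne
    obtain ⟨e₀, he₀, hse₀⟩ := hps
    obtain ⟨f, hf, hrf⟩ := hpe
    rw [IsPath, List.Chain', List.isChain_append] at hqpath
    have hsx : s x = v := by
      have := hqpath.2.2 f hf x (by simp)
      rw [← this, hrf]
    rw [List.map_append] at hnd
    have hdisj := List.disjoint_of_nodup_append hnd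
    refine hdisj (a := v) ?_ ?_
    · rw [← hse₀]
      exact List.mem_map_of_mem (f := s) (by exact List.mem_of_mem_head? he₀)
    · rw [← hsx]; simp

lemma join_closed {v : V} : ∀ L : List (List E),
    (∀ p ∈ L, p ≠ [] ∧ IsPath s r p ∧ StartsAt s p v ∧ EndsAt r p v) →
    IsPath s r L.flatten ∧
      (L ≠ [] → L.flatten ≠ [] ∧ StartsAt s L.flatten v ∧ EndsAt r L.flatten v) := by
  intro L
  induction L with
  | nil => intro _; exact ⟨List.isChain_nil, by simp⟩
  | cons q L ih =>
    intro h
    obtain ⟨hq0, hqp, hqs, hqe⟩ := h q (by simp)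
    have ihL := ih (fun p hp => h p (by simp [hp]))
    rcases eq_or_ne L [] with rfl | hLne
    · have hfl : (q :: ([] : List (List E))).flatten = q := by simp
      rw [hfl]
      exact ⟨hqp, fun _ => ⟨hq0, hqs, hqe⟩⟩
    · obtain ⟨hfl0, hfls, hfle⟩ := ihL.2 hLne
      have hflat : (q :: L).flatten = q ++ L.flatten := rfl
      constructor
      · rw [hflat, IsPath, List.Chain', List.isChain_append]
        refine ⟨hqp, ihL.1, ?_⟩
        intro x hx y hy
        obtain ⟨f, hf, hrf⟩ := hqe
        obtain ⟨e', he', hse'⟩ := hfls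
        rw [hx] at hf; rw [hy] at he'
        rw [Option.some_inj] at hf he'
        subst hf he'
        rw [hrf, ← hse']
      · intro _
        refine ⟨by simp [hflat, hq0], ?_, ?_⟩
        · obtain ⟨e₀, he₀, hse₀⟩ := hqs
          exact ⟨e₀, by rw [hflat, List.head?_append_of_ne_nil _ hq0]; exact he₀, hse₀⟩
        · obtain ⟨f, hf, hrf⟩ := hfle
          exact ⟨f, by rw [hflat, List.getLast?_append_of_ne_nil _ hfl0]; exact hf, hrf⟩

lemma join_inj {p q : List E} (hp : p ≠ []) (hq : q ≠ [])
    (h1 : ¬ p <+: q) (h2 : ¬ q <+: p) :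
    Function.Injective (fun w : List Bool => (w.map (fun b => if b then p else q)).flatten) := by
  have key : ∀ (a b : Bool), a ≠ b → ∀ X Y : List E,
      (if a then p else q) ++ X ≠ (if b then p else q) ++ Y := by
    intro a b hab X Y h
    have hor := List.prefix_or_prefix_of_prefix
      (List.prefix_append (if a then p else q) X)
      (h ▸ List.prefix_append (if b then p else q) Y)
    cases a <;> cases b <;> simp_all
  intro w w' h
  simp only at h
  induction w generalizing w' with
  | nil =>
    cases w' with
    | nil => rfl
    | cons b t =>
      exfalso
      simp only [List.map_nil, List.flatten_nil, List.map_cons, List.flatten_cons] at h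
      cases b
      · exact hq (List.append_eq_nil_iff.mp h.symm).1
      · exact hp (List.append_eq_nil_iff.mp h.symm).1
  | cons a t ih =>
    cases w' with
    | nil =>
      exfalso
      simp only [List.map_nil, List.flatten_nil, List.map_cons, List.flatten_cons] at h
      cases a
      · exact hq (List.append_eq_nil_iff.mp h).1
      · exact hp (List.append_eq_nil_iff.mp h).1
    | cons b t' =>
      simp only [List.map_cons, List.flatten_cons] at h
      rcases eq_or_ne a b with rfl | hab
      · have := List.append_cancel_left h
        rw [ih this]
      · exact absurd h (key a b hab _ _)

/-- If a graph contains two distinct cycles with a common vertex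
`v`, then the number of closed paths based at `v` of length at most `n` grows
exponentially: for some `c > 1` and all large `n` there are at least `cⁿ` such
paths. -/
theorem closed_path_count_exponential_lower_bound
    (es₁ es₂ : List E) (h₁ : IsCycle s r es₁) (h₂ : IsCycle s r es₂)
    (hdistinct : {e | e ∈ es₁} ≠ {e | e ∈ es₂})
    (v : V) (hv₁ : v ∈ cycleVerts s es₁) (hv₂ : v ∈ cycleVerts s es₂) :
    ∃ c : ℝ, 1 < c ∧ ∃ N : ℕ, ∀ n ≥ N,
      ∃ S : Finset (List E),
        (∀ p ∈ S, IsPath s r p ∧ StartsAt s p v ∧ EndsAt r p v ∧ p.length ≤ n) ∧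
        c ^ n ≤ (S.card : ℝ) := by
  classical
  obtain ⟨e₁, he₁, hse₁⟩ := hv₁
  obtain ⟨e₂, he₂, hse₂⟩ := hv₂
  obtain ⟨p₁, hp₁0, hp₁p, hp₁s, hp₁e, hp₁perm⟩ := rotate_cycle s r h₁.1 h₁.2.1 he₁ hse₁
  obtain ⟨p₂, hp₂0, hp₂p, hp₂s, hp₂e, hp₂perm⟩ := rotate_cycle s r h₂.1 h₂.2.1 he₂ hse₂
  have hnd₁ : (p₁.map s).Nodup := (hp₁perm.map s).nodup_iff.mpr h₁.2.2
  have hnd₂ : (p₂.map s).Nodup := (hp₂perm.map s).nodup_iff.mpr h₂.2.2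
  have hne : p₁ ≠ p₂ := by
    rintro rfl
    apply hdistinct
    ext x
    simp only [Set.mem_setOf_eq]
    rw [← hp₁perm.mem_iff, hp₂perm.mem_iff]
  have h1 : ¬ p₁ <+: p₂ := not_prefix_of_closed s r hne hp₂p hp₁s hp₁e hnd₂
  have h2 : ¬ p₂ <+: p₁ := not_prefix_of_closed s r hne.symm hp₁p hp₂s hp₂e hnd₁
  set L : ℕ := max p₁.length p₂.length with hLdef
  have hL : 0 < L := lt_of_lt_of_le (List.length_pos_iff.mpr hp₁0) (le_max_left _ _)
  have hL' : (0:ℝ) < L := by exact_mod_cast hL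
  refine ⟨(2:ℝ) ^ ((1:ℝ)/(2*L)), ?_, 2*L, ?_⟩
  · rw [Real.one_lt_rpow_iff (by norm_num)]
    exact Or.inl ⟨by norm_num, by positivity⟩
  intro n hn
  set k : ℕ := n / L with hkdef
  have hk2 : 2 ≤ k := by
    rw [hkdef, Nat.le_div_iff_mul_le hL]
    omega
  have hinj := join_inj (p := p₁) (q := p₂) hp₁0 hp₂0 h1 h2
  refine ⟨Finset.image (fun t : Fin k → Bool => ((List.ofFn t).map
      (fun b => if b then p₁ else p₂)).flatten) Finset.univ, ?_, ?_⟩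
  · intro pp hpp
    simp only [Finset.mem_image, Finset.mem_univ, true_and] at hpp
    obtain ⟨t, rfl⟩ := hpp
    set Lw : List (List E) := (List.ofFn t).map (fun b => if b then p₁ else p₂) with hLw
    have hcond : ∀ q ∈ Lw, q ≠ [] ∧ IsPath s r q ∧ StartsAt s q v ∧ EndsAt r q v := by
      intro q hq
      rw [hLw, List.mem_map] at hq
      obtain ⟨b, _, rfl⟩ := hq
      cases b
      · exact ⟨hp₂0, hp₂p, hp₂s, hp₂e⟩
      · exact ⟨hp₁0, hp₁p, hp₁s, hp₁e⟩
    have hLwne : Lw ≠ [] := by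
      rw [hLw]
      simp only [ne_eq, List.map_eq_nil_iff, List.ofFn_eq_nil_iff]
      omega
    obtain ⟨jp, jrest⟩ := join_closed s r Lw hcond
    obtain ⟨_, js, je⟩ := jrest hLwne
    refine ⟨jp, js, je, ?_⟩
    have hlen : Lw.flatten.length = (Lw.map List.length).sum := List.length_flatten (L := Lw)
    have hsum : (Lw.map List.length).sum ≤ (Lw.map List.length).length • L := by
      apply List.sum_le_card_nsmul
      intro x hx
      rw [List.mem_map] at hx
      obtain ⟨q, hq, rfl⟩ := hx
      rw [hLw, List.mem_map] at hq
      obtain ⟨b, _, rfl⟩ := hq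
      cases b
      · simpa [hLdef] using le_max_right p₁.length p₂.length
      · simpa [hLdef] using le_max_left p₁.length p₂.length
    have hLwlen : (Lw.map List.length).length = k := by simp [hLw]
    have hsmul : (Lw.map List.length).length • L = k * L := by rw [hLwlen, smul_eq_mul]
    have hfin : k * L ≤ n := Nat.div_mul_le_self n L
    omega
  · have hcard : (Finset.image (fun t : Fin k → Bool => ((List.ofFn t).map
        (fun b => if b then p₁ else p₂)).flatten) Finset.univ).card = 2 ^ k := by
      have hinj2 : Function.Injective (fun t : Fin k → Bool => ((List.ofFn t).map
          (fun b => if b then p₁ else p₂)).flatten) :=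
        fun a b hab => List.ofFn_injective (hinj hab)
      rw [Finset.card_image_of_injective _ hinj2, Finset.card_univ]
      simp [Fintype.card_fun]
    rw [hcard]
    have hd : Nat.div n L = k := hkdef.symm
    have hmod1 : L * k + n % L = n := hd ▸ Nat.div_add_mod n L
    have hmod2 : n % L < L := Nat.mod_lt n hL
    have hk1 : L ≤ L * k := Nat.le_mul_of_pos_right L (by omega)
    have hnk : n ≤ 2 * (L * k) := by linarith
    have hc : ((2:ℝ) ^ ((1:ℝ)/(2*L)))^n = (2:ℝ) ^ ((1:ℝ)/(2*L) * n) := by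
      rw [← Real.rpow_natCast ((2:ℝ) ^ ((1:ℝ)/(2*(L:ℝ)))) n, ← Real.rpow_mul (by norm_num)]
    rw [hc]
    have hexp : (1:ℝ)/(2*L) * n ≤ (k:ℕ) := by
      rw [div_mul_eq_mul_div, one_mul, div_le_iff₀ (by positivity)]
      calc (n:ℝ) ≤ 2*((L:ℝ)*(k:ℝ)) := by exact_mod_cast hnk
        _ = (k:ℝ) * (2*(L:ℝ)) := by ring
    calc (2:ℝ) ^ ((1:ℝ)/(2*L) * n) ≤ (2:ℝ) ^ ((k:ℕ):ℝ) :=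
        Real.rpow_le_rpow_of_exponent_le (by norm_num) hexp
      _ = ((2:ℝ))^(k:ℕ) := Real.rpow_natCast 2 k
      _ = ((2 ^ k : ℕ) : ℝ) := by push_cast; ring

end LeavittSetup
end
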